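/- arXiv:1407.1533 — 7 statements merged into one kernel-verified Lean document; each statement's English description precedes it below -/
import Mathlib

section
/- In Wythoff's game, every positive integer appears in exactly one P-position of the form (n, σ(n)) with n ≥ 0 (viewing P-positions as unordered pairs). Moreover, for a positive integer m with Zeckendorf representation m = F_{i_1} + ... + F_{i_j} (i_1 < i_2 < ... < i_j), m is the smaller element of the unordered P-position containing it if and only if the index i_1 of the smallest Fibonacci number in its Zeckendorf representation is even. -/
/-- A move in a CM-Nim game with permissible family `𝒮`: choose a permissible
(nonempty) set `S` of jars and a positive number `c` of cookies with `c ≤ p i`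
for every `i ∈ S`, and take `c` cookies from each jar in `S`. -/
def CMMove {k : ℕ} (𝒮 : Set (Finset (Fin k))) (p q : Fin k → ℕ) : Prop :=
  ∃ S ∈ 𝒮, S.Nonempty ∧ ∃ c > 0, (∀ i ∈ S, c ≤ p i ∧ q i = p i - c) ∧ ∀ i ∉ S, q i = p i

lemma CMMove.sum_lt {k : ℕ} {𝒮 : Set (Finset (Fin k))} {p q : Fin k → ℕ}
    (h : CMMove 𝒮 p q) : ∑ i, q i < ∑ i, p i := by
  obtain ⟨S, hS, ⟨i0, hi0⟩, c, hc, h1, h2⟩ := h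
  apply Finset.sum_lt_sum
  · intro i _
    by_cases hi : i ∈ S
    · have := h1 i hi; omega
    · rw [h2 i hi]
  · exact ⟨i0, Finset.mem_univ _, by have := h1 i0 hi0; omega⟩

/-- P-positions of a CM-Nim game, defined by well-founded recursion on the
total number of cookies: a position is a P-position iff every move from it
leads to a position that is not a P-position. -/
def CMPPos {k : ℕ} (𝒮 : Set (Finset (Fin k))) (p : Fin k → ℕ) : Prop :=
  ∀ q, CMMove 𝒮 p q → ¬ CMPPos 𝒮 q
termination_by ∑ i, p i
decreasing_by exact CMMove.sum_lt (by assumption)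

/-- Nim with `k` piles: only singletons are permissible. -/
def NimSets (k : ℕ) : Set (Finset (Fin k)) := {S | ∃ i, S = {i}}

/-- Wythoff's game: the permissible sets are `{1}`, `{2}` and `{1,2}`. -/
def WythoffSets : Set (Finset (Fin 2)) := {{0}, {1}, {0, 1}}

/-- The index of the largest Fibonacci number not exceeding `n`
(for `n ≥ 1` this index is at least `2`, matching the convention that the
Fibonacci number `1` is used with index `2`). -/
def greatestFibIdx (n : ℕ) : ℕ := Nat.findGreatest (fun i => Nat.fib i ≤ n) (n + 2)

lemma greatestFibIdx_le (n : ℕ) (hn : 0 < n) : Nat.fib (greatestFibIdx n) ≤ n :=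
  Nat.findGreatest_spec (P := fun i => Nat.fib i ≤ n) (m := 2) (by omega) (by show Nat.fib 2 ≤ n; rw [Nat.fib_two]; omega)

lemma two_le_greatestFibIdx (n : ℕ) (hn : 0 < n) : 2 ≤ greatestFibIdx n :=
  Nat.le_findGreatest (P := fun i => Nat.fib i ≤ n) (by omega) (by show Nat.fib 2 ≤ n; rw [Nat.fib_two]; omega)

/-- The Fibonacci successor `σ(n)`: replace each Fibonacci number in the
Zeckendorf representation of `n` (computed greedily: subtract the largest
Fibonacci number not greater than `n`, and repeat) with the next Fibonacci
number; `σ(0) = 0`. -/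
def fibSucc (n : ℕ) : ℕ :=
  if hn : n = 0 then 0
  else Nat.fib (greatestFibIdx n + 1) + fibSucc (n - Nat.fib (greatestFibIdx n))
termination_by n
decreasing_by
  have h1 := greatestFibIdx_le n (by omega)
  have h2 := two_le_greatestFibIdx n (by omega)
  have h3 : 0 < Nat.fib (greatestFibIdx n) := Nat.fib_pos.mpr (by omega)
  omega

/-- `I` is the index set of a Zeckendorf representation: all indices are at
least `2` and no two indices are consecutive. -/
def IsZeckendorf (I : Finset ℕ) : Prop := (∀ i ∈ I, 2 ≤ i) ∧ ∀ i ∈ I, i + 1 ∉ I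


/-! ### Auxiliary development -/

open goldenRatio

lemma greatestFibIdx_eq (n : ℕ) : greatestFibIdx n = Nat.greatestFib n := by
  unfold greatestFibIdx Nat.greatestFib
  have h : ¬ (Nat.fib (n+2) ≤ n) := by
    have := Nat.le_fib_add_one (n+2)
    omega
  rw [show n + 2 = (n+1) + 1 from rfl, Nat.findGreatest_succ, if_neg h]

lemma fibSucc_eq_sum (n : ℕ) :
    fibSucc n = ((Nat.zeckendorf n).map (fun i => Nat.fib (i+1))).sum := by
  induction n using Nat.strong_induction_on with
  | _ n ih =>
    rcases Nat.eq_zero_or_pos n with rfl | hn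
    · simp [fibSucc]
    · rw [fibSucc, dif_neg hn.ne', Nat.zeckendorf_of_pos hn, List.map_cons, List.sum_cons,
        greatestFibIdx_eq, ih _ (by
          have := Nat.fib_pos.mpr (show 0 < Nat.greatestFib n by simpa using hn)
          have := Nat.fib_greatestFib_le n
          omega)]

lemma gold_linarith : (φ - 1) * φ = 1 := by nlinarith [Real.goldenRatio_sq]

lemma psi_eq : ψ = -(φ - 1) := by
  rw [← Real.one_sub_goldenConj]; ring

lemma zeck_cons_rel {a b : ℕ} {t : List ℕ} (h : List.IsZeckendorfRep (a :: b :: t)) :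
    b + 2 ≤ a ∧ List.IsZeckendorfRep (b :: t) := by
  unfold List.IsZeckendorfRep at *
  rw [List.cons_append, List.cons_append, List.isChain_cons_cons] at h
  rw [List.cons_append]
  exact ⟨h.1, h.2⟩

lemma zeck_two_le : ∀ {l : List ℕ}, List.IsZeckendorfRep l → ∀ x ∈ l, 2 ≤ x
  | [], _, x, hx => by simp at hx
  | a :: t, h, x, hx => by
    have h' : List.IsChain (fun a b => b + 2 ≤ a) (a :: (t ++ [0])) := h
    rw [List.isChain_cons] at h'
    rcases List.mem_cons.1 hx with rfl | hx
    · cases t with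
      | nil => simpa using h'.1 0 (by simp)
      | cons b t => have := h'.1 b (by simp); omega
    · exact zeck_two_le h'.2 x hx

lemma psi_pow_abs (i : ℕ) : |ψ ^ i| = (φ - 1) ^ i := by
  rw [abs_pow, psi_eq, abs_neg, abs_of_pos (by have := Real.one_lt_goldenRatio; linarith)]

lemma r_pos : (0:ℝ) < φ - 1 := by have := Real.one_lt_goldenRatio; linarith
lemma r_lt_one : φ - 1 < 1 := by have := Real.goldenRatio_lt_two; linarith

lemma r_pow_collapse (k : ℕ) : (φ-1) ^ (k+1) + (φ-1) ^ (k+1+1) = (φ-1) ^ k := by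
  linear_combination ((φ-1)^k) * gold_linarith

lemma sum_psi_bound : ∀ (t : List ℕ) (a : ℕ), List.IsZeckendorfRep (a :: t) →
    |((a :: t).map fun i => ψ ^ i).sum - ψ ^ ((a :: t).getLast?.getD 0)| ≤
      (φ - 1) ^ (((a :: t).getLast?.getD 0) + 1) - (φ - 1) ^ (a + 1)
  | [], a, _ => by simp
  | b :: t, a, h => by
    obtain ⟨hab, hbt⟩ := zeck_cons_rel h
    have ih := sum_psi_bound t b hbt
    have hlast : ((a :: b :: t).getLast?.getD 0) = ((b :: t).getLast?.getD 0) := by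
      rw [List.getLast?_cons_cons]
    rw [hlast, List.map_cons, List.sum_cons]
    have key : (φ - 1) ^ a + (φ - 1) ^ (a + 1) ≤ (φ - 1) ^ (b + 1) := by
      have e : (φ-1) ^ a + (φ-1) ^ (a+1) = (φ-1) ^ (a-1) := by
        have ha : a = (a - 1) + 1 := by omega
        rw [ha]; exact r_pow_collapse (a-1)
      rw [e]
      exact pow_le_pow_of_le_one (le_of_lt r_pos) (le_of_lt r_lt_one) (by omega)
    have tri : |ψ ^ a + (((b :: t).map fun i => ψ ^ i).sum) - ψ ^ ((b :: t).getLast?.getD 0)|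
        ≤ |ψ ^ a| + |(((b :: t).map fun i => ψ ^ i).sum) - ψ ^ ((b :: t).getLast?.getD 0)| := by
      rw [add_sub_assoc]; exact abs_add_le _ _
    have := psi_pow_abs a
    linarith [tri, ih]

lemma list_fib_psi : ∀ (l : List ℕ),
    ((l.map fun i => (Nat.fib (i+1) : ℝ)).sum) - φ * ((l.map fun i => (Nat.fib i : ℝ)).sum)
      = (l.map fun i => ψ ^ i).sum
  | [] => by simp
  | a :: t => by
    have ih := list_fib_psi t
    simp only [List.map_cons, List.sum_cons]
    rw [← ih, ← Real.fib_succ_sub_goldenRatio_mul_fib a]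
    ring

/-- The smallest index in the (greedy) Zeckendorf representation. -/
def minIdx (n : ℕ) : ℕ := (Nat.zeckendorf n).getLast?.getD 0

lemma S_bounds {n : ℕ} (hn : 0 < n) :
    |((fibSucc n : ℝ) - φ * n) - ψ ^ (minIdx n)| < (φ-1) ^ (minIdx n + 1) ∧ 2 ≤ minIdx n := by
  have hrep := Nat.isZeckendorfRep_zeckendorf n
  have hz : Nat.zeckendorf n = Nat.greatestFib n :: Nat.zeckendorf (n - Nat.fib (Nat.greatestFib n)) :=
    Nat.zeckendorf_of_pos hn
  have hrep' : List.IsZeckendorfRep (Nat.greatestFib n :: Nat.zeckendorf (n - Nat.fib (Nat.greatestFib n))) := hz ▸ hrep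
  have hbd := sum_psi_bound _ _ hrep'
  have e1 : (n:ℝ) = ((Nat.zeckendorf n).map fun i => (Nat.fib i : ℝ)).sum := by
    conv_lhs => rw [← Nat.sum_zeckendorf_fib n]
    rw [Nat.cast_list_sum, List.map_map]
    rfl
  have e2 : (fibSucc n : ℝ) = ((Nat.zeckendorf n).map fun i => (Nat.fib (i+1) : ℝ)).sum := by
    rw [fibSucc_eq_sum, Nat.cast_list_sum, List.map_map]
    rfl
  have e3 : (fibSucc n : ℝ) - φ * n = ((Nat.zeckendorf n).map fun i => ψ ^ i).sum := by
    rw [e1, e2, list_fib_psi]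
  have hm : minIdx n = ((Nat.greatestFib n :: Nat.zeckendorf (n - Nat.fib (Nat.greatestFib n))).getLast?.getD 0) := by
    unfold minIdx; rw [hz]
  constructor
  · rw [e3, hz, hm]
    refine lt_of_le_of_lt hbd ?_
    have : (0:ℝ) < (φ-1) ^ (Nat.greatestFib n + 1) := pow_pos r_pos _
    linarith
  · rw [hm, List.getLast?_eq_getLast (List.cons_ne_nil _ _)]
    exact zeck_two_le hrep' _ (List.getLast_mem _)

/-- `n` is a "lower" number: positive with even minimal Zeckendorf index. -/
def WLower (n : ℕ) : Prop := 0 < n ∧ Even (minIdx n)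

/-- `n` is an "upper" number: positive with odd minimal Zeckendorf index. -/
def WUpper (n : ℕ) : Prop := 0 < n ∧ Odd (minIdx n)

lemma S_lower {n : ℕ} (h : WLower n) :
    0 < (fibSucc n : ℝ) - φ * n ∧ (fibSucc n : ℝ) - φ * n < φ - 1 := by
  obtain ⟨hn, he⟩ := h
  obtain ⟨hb, hm2⟩ := S_bounds hn
  set m := minIdx n
  have hpsi : ψ ^ m = (φ - 1) ^ m := by rw [psi_eq, he.neg_pow]
  rw [hpsi] at hb
  rw [abs_lt] at hb
  have h1 : (φ-1) ^ (m+1) = (φ-1)^m * (φ-1) := pow_succ _ _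
  have h2 : (0:ℝ) < (φ-1)^m := pow_pos r_pos m
  have h3 : (φ-1)^m + (φ-1)^(m+1) = (φ-1)^(m-1) := by
    have : m = (m-1)+1 := by omega
    rw [this]; exact r_pow_collapse (m-1)
  have h4 : (φ-1)^(m-1) ≤ (φ-1)^1 :=
    pow_le_pow_of_le_one (le_of_lt r_pos) (le_of_lt r_lt_one) (by omega)
  constructor
  · nlinarith [r_pos, r_lt_one]
  · rw [pow_one] at h4; linarith

lemma S_upper {n : ℕ} (h : WUpper n) :
    -(φ - 1) < (fibSucc n : ℝ) - φ * n ∧ (fibSucc n : ℝ) - φ * n < 0 := by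
  obtain ⟨hn, he⟩ := h
  obtain ⟨hb, hm2⟩ := S_bounds hn
  set m := minIdx n
  have hpsi : ψ ^ m = -((φ - 1) ^ m) := by rw [psi_eq, he.neg_pow]
  rw [hpsi] at hb
  rw [abs_lt] at hb
  have h1 : (φ-1) ^ (m+1) = (φ-1)^m * (φ-1) := pow_succ _ _
  have h2 : (0:ℝ) < (φ-1)^m := pow_pos r_pos m
  have h3 : (φ-1)^m + (φ-1)^(m+1) = (φ-1)^(m-1) := by
    have : m = (m-1)+1 := by omega
    rw [this]; exact r_pow_collapse (m-1)
  have h4 : (φ-1)^(m-1) ≤ (φ-1)^1 :=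
    pow_le_pow_of_le_one (le_of_lt r_pos) (le_of_lt r_lt_one) (by omega)
  constructor
  · rw [pow_one] at h4; linarith
  · nlinarith [r_pos, r_lt_one]

lemma S_both {n : ℕ} (hn : 0 < n) :
    -(φ - 1) < (fibSucc n : ℝ) - φ * n ∧ (fibSucc n : ℝ) - φ * n < φ - 1 := by
  rcases Nat.even_or_odd (minIdx n) with he | ho
  · have := S_lower ⟨hn, he⟩; constructor <;> [linarith [r_pos]; exact this.2]
  · have := S_upper ⟨hn, ho⟩; constructor <;> [exact this.1; linarith [r_pos]]

/-- σ(n) > n for positive n. -/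
lemma fibSucc_gt {n : ℕ} (hn : 0 < n) : n < fibSucc n := by
  have h := (S_both hn).1
  have hφ := Real.one_lt_goldenRatio
  have hn1 : (1:ℝ) ≤ n := by exact_mod_cast hn
  have : (n:ℝ) < fibSucc n := by nlinarith
  exact_mod_cast this

/-- σ is strictly increasing on positive integers. -/
lemma fibSucc_strictMono {x y : ℕ} (hx : 0 < x) (hxy : x < y) : fibSucc x < fibSucc y := by
  have h1 := S_both hx
  have h2 := S_both (by omega : 0 < y)
  have hxy' : (x:ℝ) + 1 ≤ y := by exact_mod_cast hxy
  have hφ := Real.one_lt_goldenRatio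
  have hφ2 := Real.goldenRatio_lt_two
  have : (fibSucc x : ℝ) < fibSucc y := by nlinarith
  exact_mod_cast this

/-- Two lower numbers have σ-values at least 2 apart. -/
lemma fibSucc_lower_gap {x y : ℕ} (hx : WLower x) (hy : WLower y) (hxy : x < y) :
    fibSucc x + 2 ≤ fibSucc y := by
  have h1 := S_lower hx
  have h2 := S_lower hy
  have hxy' : (x:ℝ) + 1 ≤ y := by exact_mod_cast hxy
  have hφ := Real.one_lt_goldenRatio
  have : (fibSucc x : ℝ) + 1 < fibSucc y := by nlinarith
  have : fibSucc x + 1 < fibSucc y := by exact_mod_cast this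
  omega

/-- The difference function τ. -/
def wTau (n : ℕ) : ℕ := fibSucc n - n

lemma wTau_ge_one {n : ℕ} (hn : 0 < n) : 1 ≤ wTau n := by
  have := fibSucc_gt hn; unfold wTau; omega

lemma fibSucc_eq_add_tau {n : ℕ} (hn : 0 < n) : fibSucc n = n + wTau n := by
  have := fibSucc_gt hn; unfold wTau; omega

/-- τ is strictly monotone on lower numbers. -/
lemma wTau_mono {x y : ℕ} (hx : WLower x) (hy : WLower y) (hxy : x < y) :
    wTau x < wTau y := by
  have h1 := S_lower hx
  have h2 := S_lower hy
  have hsx := fibSucc_eq_add_tau hx.1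
  have hsy := fibSucc_eq_add_tau hy.1
  have hxy' : (x:ℝ) + 1 ≤ y := by exact_mod_cast hxy
  have e1 : (fibSucc x : ℝ) = x + wTau x := by exact_mod_cast hsx
  have e2 : (fibSucc y : ℝ) = y + wTau y := by exact_mod_cast hsy
  have hφ := Real.one_lt_goldenRatio
  have : (wTau x : ℝ) < wTau y := by nlinarith
  exact_mod_cast this

/-- τ increases by at most 1 between lower numbers within distance 2. -/
lemma wTau_step {x y : ℕ} (hx : WLower x) (hy : WLower y) (hxy : x < y) (hle : y ≤ x + 2) :
    wTau y ≤ wTau x + 1 := by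
  have h1 := S_lower hx
  have h2 := S_lower hy
  have hsx := fibSucc_eq_add_tau hx.1
  have hsy := fibSucc_eq_add_tau hy.1
  have hxy' : (y:ℝ) ≤ x + 2 := by exact_mod_cast hle
  have e1 : (fibSucc x : ℝ) = x + wTau x := by exact_mod_cast hsx
  have e2 : (fibSucc y : ℝ) = y + wTau y := by exact_mod_cast hsy
  have hφ : φ < 5/3 := by
    have h5 : Real.sqrt 5 < 7/3 := by
      rw [show (7:ℝ)/3 = Real.sqrt ((7/3)^2) by rw [Real.sqrt_sq]; norm_num]
      apply Real.sqrt_lt_sqrt <;> norm_num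
    rw [Real.goldenRatio]; linarith
  have : (wTau y : ℝ) < wTau x + 2 := by nlinarith
  have : (wTau y : ℝ) < (wTau x : ℝ) + 2 := this
  have := (by exact_mod_cast this : wTau y < wTau x + 2)
  omega

lemma zeck_map_add_one : ∀ {l : List ℕ}, List.IsZeckendorfRep l →
    List.IsZeckendorfRep (l.map (· + 1))
  | [], _ => by simp [List.IsZeckendorfRep]
  | [a], h => by
    have := zeck_two_le h a (by simp)
    unfold List.IsZeckendorfRep
    simp only [List.map_cons, List.map_nil, List.cons_append, List.nil_append]
    exact List.isChain_pair.2 (by omega)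
  | a :: b :: t, h => by
    obtain ⟨hab, h2⟩ := zeck_cons_rel h
    have ih := zeck_map_add_one h2
    unfold List.IsZeckendorfRep at ih ⊢
    simp only [List.map_cons, List.cons_append] at ih ⊢
    rw [List.isChain_cons_cons]
    exact ⟨by omega, ih⟩

lemma zeck_map_sub_one : ∀ {l : List ℕ}, List.IsZeckendorfRep l →
    3 ≤ l.getLast?.getD 3 → List.IsZeckendorfRep (l.map (· - 1))
  | [], _, _ => by simp [List.IsZeckendorfRep]
  | [a], h, h3 => by
    have h3' : 3 ≤ a := by simpa using h3
    unfold List.IsZeckendorfRep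
    simp only [List.map_cons, List.map_nil, List.cons_append, List.nil_append]
    exact List.isChain_pair.2 (by omega)
  | a :: b :: t, h, h3 => by
    obtain ⟨hab, h2⟩ := zeck_cons_rel h
    have hb2 := zeck_two_le h2 b (by simp)
    have ih := zeck_map_sub_one h2 (by rwa [List.getLast?_cons_cons] at h3)
    unfold List.IsZeckendorfRep at ih ⊢
    simp only [List.map_cons, List.cons_append] at ih ⊢
    rw [List.isChain_cons_cons]
    exact ⟨by omega, ih⟩

lemma minIdx_two_le {n : ℕ} (hn : 0 < n) : 2 ≤ minIdx n := (S_bounds hn).2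

lemma lower_sigma_upper {a : ℕ} (ha : WLower a) : WUpper (fibSucc a) := by
  obtain ⟨ha0, hae⟩ := ha
  have hrep := Nat.isZeckendorfRep_zeckendorf a
  have hrep' := zeck_map_add_one hrep
  have hsum : ((Nat.zeckendorf a).map (· + 1)).map Nat.fib
      = (Nat.zeckendorf a).map (fun i => Nat.fib (i+1)) := by
    rw [List.map_map]; rfl
  have hσ : fibSucc a = (((Nat.zeckendorf a).map (· + 1)).map Nat.fib).sum := by
    rw [hsum, fibSucc_eq_sum]
  have hz : Nat.zeckendorf (fibSucc a) = (Nat.zeckendorf a).map (· + 1) := by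
    rw [hσ]; exact Nat.zeckendorf_sum_fib hrep'
  have hσ0 : 0 < fibSucc a := lt_trans ha0 (fibSucc_gt ha0)
  refine ⟨hσ0, ?_⟩
  have hne : Nat.zeckendorf a ≠ [] := by
    rw [Nat.zeckendorf_of_pos ha0]; simp
  have : minIdx (fibSucc a) = minIdx a + 1 := by
    unfold minIdx
    rw [hz, List.getLast?_map, List.getLast?_eq_getLast hne]
    simp
  rw [this]
  exact Even.add_one hae

lemma upper_eq_sigma {u : ℕ} (hu : WUpper u) : ∃ a, WLower a ∧ fibSucc a = u := by
  obtain ⟨hu0, huo⟩ := hu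
  have hrep := Nat.isZeckendorfRep_zeckendorf u
  have hne : Nat.zeckendorf u ≠ [] := by
    rw [Nat.zeckendorf_of_pos hu0]; simp
  have hlast3 : 3 ≤ (Nat.zeckendorf u).getLast?.getD 3 := by
    rw [List.getLast?_eq_getLast hne]
    have h2 := minIdx_two_le hu0
    unfold minIdx at h2 huo
    rw [List.getLast?_eq_getLast hne] at h2 huo
    simp only [Option.getD_some] at h2 huo ⊢
    rcases huo with ⟨k, hk⟩
    omega
  have hrep' := zeck_map_sub_one hrep hlast3
  set a : ℕ := (((Nat.zeckendorf u).map (· - 1)).map Nat.fib).sum with hadef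
  have hz : Nat.zeckendorf a = (Nat.zeckendorf u).map (· - 1) :=
    Nat.zeckendorf_sum_fib hrep'
  have ha0 : 0 < a := by
    rw [hadef]
    rcases hlist : Nat.zeckendorf u with _ | ⟨c, t⟩
    · exact absurd hlist hne
    · have hc := zeck_two_le hrep c (by rw [hlist]; simp)
      simp only [List.map_cons, List.sum_cons]
      have : 0 < Nat.fib (c - 1) := Nat.fib_pos.2 (by omega)
      omega
  have hmap : ((Nat.zeckendorf u).map (· - 1)).map (fun i => Nat.fib (i+1))
      = (Nat.zeckendorf u).map Nat.fib := by
    rw [List.map_map]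
    apply List.map_congr_left
    intro x hx
    have := zeck_two_le hrep x hx
    simp only [Function.comp_apply]
    congr 1
    omega
  have hσa : fibSucc a = u := by
    rw [fibSucc_eq_sum, hz, hmap]
    exact Nat.sum_zeckendorf_fib u
  refine ⟨a, ⟨ha0, ?_⟩, hσa⟩
  have hne' : Nat.zeckendorf u ≠ [] := hne
  unfold minIdx
  rw [hz, List.getLast?_map, List.getLast?_eq_getLast hne]
  unfold minIdx at huo
  rw [List.getLast?_eq_getLast hne] at huo
  simp only [Option.map_some, Option.getD_some] at huo ⊢
  rcases huo with ⟨k, hk⟩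
  exact ⟨k, by omega⟩

lemma zeck_fib_even (k : ℕ) : Nat.zeckendorf (Nat.fib (2*k+2)) = [2*k+2] := by
  have hpos : 0 < Nat.fib (2*k+2) := Nat.fib_pos.2 (by omega)
  rw [Nat.zeckendorf_of_pos hpos, Nat.greatestFib_fib (by omega)]
  simp

lemma lower_fib_even (k : ℕ) : WLower (Nat.fib (2*k+2)) := by
  refine ⟨Nat.fib_pos.2 (by omega), ?_⟩
  unfold minIdx
  rw [zeck_fib_even k]
  exact ⟨k+1, by simp; omega⟩

lemma lower_one : WLower 1 := by
  have := lower_fib_even 0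
  simpa using this

lemma fibSucc_one : fibSucc 1 = 2 := by
  rw [fibSucc_eq_sum]
  have : Nat.zeckendorf 1 = [2] := by simpa using zeck_fib_even 0
  rw [this]
  simp
  decide

lemma lower_unbounded (x : ℕ) : ∃ a, WLower a ∧ x < a := by
  refine ⟨Nat.fib (2*x+2), lower_fib_even x, ?_⟩
  have := Nat.le_fib_add_one (2*x+2)
  omega

lemma lower_or_upper {n : ℕ} (hn : 0 < n) : WLower n ∨ WUpper n := by
  rcases Nat.even_or_odd (minIdx n) with h | h
  · exact Or.inl ⟨hn, h⟩
  · exact Or.inr ⟨hn, h⟩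

lemma not_lower_upper {n : ℕ} (h1 : WLower n) (h2 : WUpper n) : False :=
  (Nat.not_odd_iff_even.2 h1.2) h2.2

lemma exists_tau : ∀ d, 1 ≤ d → ∃ a, WLower a ∧ wTau a = d := by
  intro d
  induction d with
  | zero => omega
  | succ d ih =>
    intro _
    rcases Nat.eq_zero_or_pos d with rfl | hd
    · refine ⟨1, lower_one, ?_⟩
      unfold wTau; rw [fibSucc_one]
    · obtain ⟨a, ha, hτ⟩ := ih hd
      have hex : ∃ b, WLower b ∧ a < b := lower_unbounded a
      classical
      have hex' : ∃ b, WLower (b : ℕ) ∧ a < b := hex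
      set b := Nat.find hex' with hb
      obtain ⟨hbl, hab⟩ := Nat.find_spec hex'
      have hmin : ∀ c, c < b → ¬(WLower c ∧ a < c) := fun c hc => Nat.find_min hex' hc
      have hble : b ≤ a + 2 := by
        by_contra hgt
        push_neg at hgt
        have h1 : WUpper (a+1) := by
          rcases lower_or_upper (show 0 < a+1 by omega) with h | h
          · exact absurd ⟨h, by omega⟩ (hmin (a+1) (by omega))
          · exact h
        have h2 : WUpper (a+2) := by
          rcases lower_or_upper (show 0 < a+2 by omega) with h | h
          · exact absurd ⟨h, by omega⟩ (hmin (a+2) (by omega))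
          · exact h
        obtain ⟨u, hu, huσ⟩ := upper_eq_sigma h1
        obtain ⟨v, hv, hvσ⟩ := upper_eq_sigma h2
        rcases lt_trichotomy u v with h | h | h
        · have := fibSucc_lower_gap hu hv h; omega
        · subst h; omega
        · have := fibSucc_lower_gap hv hu h; omega
      refine ⟨b, hbl, ?_⟩
      have hlt : wTau a < wTau b := wTau_mono ha hbl hab
      have hle : wTau b ≤ wTau a + 1 := wTau_step ha hbl hab hble
      omega

lemma tau_inj {a b : ℕ} (ha : WLower a) (hb : WLower b) (h : wTau a = wTau b) : a = b := by
  rcases lt_trichotomy a b with hlt | he | hgt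
  · have := wTau_mono ha hb hlt; omega
  · exact he
  · have := wTau_mono hb ha hgt; omega

lemma sigma_inj {a b : ℕ} (ha : 0 < a) (hb : 0 < b) (h : fibSucc a = fibSucc b) : a = b := by
  rcases lt_trichotomy a b with hlt | he | hgt
  · have := fibSucc_strictMono ha hlt; omega
  · exact he
  · have := fibSucc_strictMono hb hgt; omega

lemma vec_eta (q : Fin 2 → ℕ) : ![q 0, q 1] = q := by
  funext i; fin_cases i <;> rfl

lemma wmove_iff {x y : ℕ} {q : Fin 2 → ℕ} :
    CMMove WythoffSets ![x, y] q ↔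
      ∃ c, 0 < c ∧ ((c ≤ x ∧ q 0 = x - c ∧ q 1 = y) ∨
        (c ≤ y ∧ q 0 = x ∧ q 1 = y - c) ∨
        (c ≤ x ∧ c ≤ y ∧ q 0 = x - c ∧ q 1 = y - c)) := by
  constructor
  · rintro ⟨S, hS, hne, c, hc, h1, h2⟩
    refine ⟨c, hc, ?_⟩
    rcases hS with hS | hS | hS
    · subst hS
      have e1 := h1 0 (by decide)
      have e2 := h2 1 (by decide)
      simp only [Matrix.cons_val_zero, Matrix.cons_val_one, Matrix.head_cons] at e1 e2
      exact Or.inl ⟨e1.1, e1.2, e2⟩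
    · subst hS
      have e1 := h1 1 (by decide)
      have e2 := h2 0 (by decide)
      simp only [Matrix.cons_val_zero, Matrix.cons_val_one, Matrix.head_cons] at e1 e2
      exact Or.inr (Or.inl ⟨e1.1, e2, e1.2⟩)
    · rw [Set.mem_singleton_iff] at hS
      subst hS
      have e1 := h1 0 (by decide)
      have e2 := h1 1 (by decide)
      simp only [Matrix.cons_val_zero, Matrix.cons_val_one, Matrix.head_cons] at e1 e2
      exact Or.inr (Or.inr ⟨e1.1, e2.1, e1.2, e2.2⟩)
  · rintro ⟨c, hc, h | h | h⟩
    · refine ⟨{0}, Or.inl rfl, ⟨0, by decide⟩, c, hc, ?_, ?_⟩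
      · intro i hi
        have : i = 0 := by rcases Finset.mem_singleton.1 hi with h; exact h
        subst this
        simpa using ⟨h.1, h.2.1⟩
      · intro i hi
        fin_cases i
        · exact absurd (by decide) hi
        · simpa using h.2.2
    · refine ⟨{1}, Or.inr (Or.inl rfl), ⟨1, by decide⟩, c, hc, ?_, ?_⟩
      · intro i hi
        have : i = 1 := by rcases Finset.mem_singleton.1 hi with h; exact h
        subst this
        simpa using ⟨h.1, h.2.2⟩
      · intro i hi
        fin_cases i
        · simpa using h.2.1
        · exact absurd (by decide) hi
    · refine ⟨{0, 1}, Or.inr (Or.inr rfl), ⟨0, by decide⟩, c, hc, ?_, ?_⟩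
      · intro i hi
        fin_cases i
        · simpa using ⟨h.1, h.2.2.1⟩
        · simpa using ⟨h.2.1, h.2.2.2⟩
      · intro i hi
        exfalso
        apply hi
        fin_cases i <;> decide

/-- The set of P-positions of Wythoff's game. -/
def WPSet (x y : ℕ) : Prop :=
  (x = 0 ∧ y = 0) ∨ ∃ a, WLower a ∧ ((x = a ∧ y = fibSucc a) ∨ (x = fibSucc a ∧ y = a))

lemma wpset_no_move {x y : ℕ} (h : WPSet x y) {q : Fin 2 → ℕ}
    (hq : CMMove WythoffSets ![x, y] q) : ¬ WPSet (q 0) (q 1) := by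
  obtain ⟨c, hc, hmv⟩ := wmove_iff.1 hq
  intro hP
  rcases h with ⟨rfl, rfl⟩ | ⟨a, ha, hxy⟩
  · omega
  · have ha0 := ha.1
    have hsa := fibSucc_eq_add_tau ha.1
    have hta := wTau_ge_one ha.1
    rcases hP with ⟨h0, h1⟩ | ⟨b, hb, hq'⟩
    · omega
    · have hb0 := hb.1
      have hsb := fibSucc_eq_add_tau hb.1
      have htb := wTau_ge_one hb.1
      have hab1 : a ≠ fibSucc b := fun he =>
        not_lower_upper (he ▸ ha) (lower_sigma_upper hb)
      have hab2 : b ≠ fibSucc a := fun he =>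
        not_lower_upper (he ▸ hb) (lower_sigma_upper ha)
      rcases lt_trichotomy a b with ht | ht | ht
      · have := wTau_mono ha hb ht
        have := fibSucc_strictMono ha0 ht
        omega
      · subst ht
        omega
      · have := wTau_mono hb ha ht
        have := fibSucc_strictMono hb0 ht
        omega

lemma wpset_move_exists' {x y : ℕ} (hxy : x ≤ y) (h : ¬ WPSet x y) :
    ∃ u v : ℕ, CMMove WythoffSets ![x, y] ![u, v] ∧ WPSet u v := by
  rcases Nat.eq_zero_or_pos x with rfl | hx
  · have hy : 0 < y := by
      rcases Nat.eq_zero_or_pos y with rfl | hy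
      · exact absurd (Or.inl ⟨rfl, rfl⟩) h
      · exact hy
    refine ⟨0, 0, wmove_iff.2 ⟨y, hy, Or.inr (Or.inl ⟨le_rfl, rfl, by simp⟩)⟩, Or.inl ⟨rfl, rfl⟩⟩
  · rcases Nat.eq_or_lt_of_le hxy with rfl | hlt
    · exact ⟨0, 0, wmove_iff.2 ⟨x, hx, Or.inr (Or.inr ⟨le_rfl, le_rfl, by simp, by simp⟩)⟩,
        Or.inl ⟨rfl, rfl⟩⟩
    · set d := y - x with hd
      have hd1 : 1 ≤ d := by omega
      obtain ⟨l, hl, hτ⟩ := exists_tau d hd1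
      have hsl : fibSucc l = l + d := by rw [fibSucc_eq_add_tau hl.1, hτ]
      rcases lt_trichotomy x l with hxl | hxl | hxl
      · rcases lower_or_upper hx with hlx | hux
        · refine ⟨x, fibSucc x, ?_, Or.inr ⟨x, hlx, Or.inl ⟨rfl, rfl⟩⟩⟩
          have hτx : wTau x < d := hτ ▸ wTau_mono hlx hl hxl
          have hsx : fibSucc x = x + wTau x := fibSucc_eq_add_tau hx
          refine wmove_iff.2 ⟨y - fibSucc x, by omega, Or.inr (Or.inl ⟨by omega, by simp, by simp; omega⟩)⟩
        · obtain ⟨u, hu, huσ⟩ := upper_eq_sigma hux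
          have huu : u < x := huσ ▸ fibSucc_gt hu.1
          refine ⟨x, u, ?_, Or.inr ⟨u, hu, Or.inr ⟨huσ.symm, rfl⟩⟩⟩
          refine wmove_iff.2 ⟨y - u, by omega, Or.inr (Or.inl ⟨by omega, by simp, by simp; omega⟩)⟩
      · exact absurd (Or.inr ⟨l, hl, Or.inl ⟨hxl, by omega⟩⟩) h
      · refine ⟨l, fibSucc l, ?_, Or.inr ⟨l, hl, Or.inl ⟨rfl, rfl⟩⟩⟩
        refine wmove_iff.2 ⟨x - l, by omega, Or.inr (Or.inr ⟨by omega, by omega, by simp; omega, by simp; omega⟩)⟩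

lemma wmove_mirror {x y u v : ℕ} (h : CMMove WythoffSets ![x, y] ![u, v]) :
    CMMove WythoffSets ![y, x] ![v, u] := by
  obtain ⟨c, hc, hmv⟩ := wmove_iff.1 h
  simp only [Matrix.cons_val_zero, Matrix.cons_val_one, Matrix.head_cons] at hmv
  refine wmove_iff.2 ⟨c, hc, ?_⟩
  simp only [Matrix.cons_val_zero, Matrix.cons_val_one, Matrix.head_cons]
  tauto

lemma wpset_symm {x y : ℕ} (h : WPSet x y) : WPSet y x := by
  rcases h with ⟨rfl, rfl⟩ | ⟨a, ha, h | h⟩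
  · exact Or.inl ⟨rfl, rfl⟩
  · exact Or.inr ⟨a, ha, Or.inr ⟨h.2, h.1⟩⟩
  · exact Or.inr ⟨a, ha, Or.inl ⟨h.2, h.1⟩⟩

lemma wpset_move_exists {x y : ℕ} (h : ¬ WPSet x y) :
    ∃ u v : ℕ, CMMove WythoffSets ![x, y] ![u, v] ∧ WPSet u v := by
  rcases le_total x y with hxy | hxy
  · exact wpset_move_exists' hxy h
  · obtain ⟨u, v, hmv, hP⟩ := wpset_move_exists' hxy (fun hP => h (wpset_symm hP))
    exact ⟨v, u, wmove_mirror hmv, wpset_symm hP⟩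

lemma cmppos_unfold {k : ℕ} (𝒮 : Set (Finset (Fin k))) (p : Fin k → ℕ) :
    CMPPos 𝒮 p ↔ ∀ q, CMMove 𝒮 p q → ¬ CMPPos 𝒮 q := by
  rw [CMPPos]

lemma wpset_iff_ppos : ∀ N x y, x + y ≤ N → (CMPPos WythoffSets ![x, y] ↔ WPSet x y) := by
  intro N
  induction N using Nat.strong_induction_on with
  | _ N ih =>
    intro x y hN
    constructor
    · intro hP
      by_contra hnP
      obtain ⟨u, v, hmv, hPuv⟩ := wpset_move_exists hnP
      have hsum := hmv.sum_lt
      have hult : u + v < x + y := by simpa [Fin.sum_univ_two] using hsum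
      have hpos : CMPPos WythoffSets ![u, v] := (ih (u + v) (by omega) u v le_rfl).2 hPuv
      exact (cmppos_unfold _ _ |>.1 hP) _ hmv hpos
    · intro hP
      rw [cmppos_unfold]
      intro q hq hPq
      have hsum := hq.sum_lt
      have hqlt : q 0 + q 1 < x + y := by simpa [Fin.sum_univ_two] using hsum
      have hq' : CMPPos WythoffSets ![q 0, q 1] := by rw [vec_eta]; exact hPq
      have := (ih (q 0 + q 1) (by omega) _ _ le_rfl).1 hq'
      exact wpset_no_move hP hq this

lemma finset_zeck_minIdx {I : Finset ℕ} (hI : IsZeckendorf I) {m : ℕ} (hm : 0 < m)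
    (hsum : m = ∑ i ∈ I, Nat.fib i) {i₁ : ℕ} (hi₁ : i₁ ∈ I) (hmin : ∀ j ∈ I, i₁ ≤ j) :
    minIdx m = i₁ := by
  set l : List ℕ := (I.sort (· ≤ ·)).reverse with hl
  have hmeml : ∀ x, x ∈ l → x ∈ I := by
    intro x hx
    rw [hl, List.mem_reverse] at hx
    exact (Finset.mem_sort _).1 hx
  have hpw : l.Pairwise (fun a b => b + 2 ≤ a) := by
    have h1 : l.Pairwise (fun a b => b < a) := by
      rw [hl, List.pairwise_reverse]
      exact (Finset.sortedLT_sort I).pairwise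
    refine List.Pairwise.imp_of_mem ?_ h1
    intro a b ha hb hab
    have ha' : a ∈ I := hmeml a ha
    have hb' : b ∈ I := hmeml b hb
    by_contra hcon
    have : a = b + 1 := by omega
    exact hI.2 b hb' (this ▸ ha')
  have hrep : l.IsZeckendorfRep := by
    unfold List.IsZeckendorfRep
    refine List.isChain_append.2 ⟨hpw.isChain, List.isChain_singleton 0, ?_⟩
    intro x hx y hy
    simp only [List.head?_cons, Option.mem_some_iff] at hy
    subst hy
    have : x ∈ l := List.mem_of_mem_getLast? hx
    have := hI.1 x (hmeml x this)
    omega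
  have hsum2 : (l.map Nat.fib).sum = m := by
    rw [hl, List.map_reverse, List.sum_reverse, hsum, ← Finset.sum_map_toList]
    exact List.Perm.sum_eq (List.Perm.map _ (Finset.sort_perm_toList (s := I) (r := (· ≤ ·))))
  have hz : Nat.zeckendorf m = l := by
    rw [← hsum2]
    exact Nat.zeckendorf_sum_fib hrep
  unfold minIdx
  rw [hz, hl, List.getLast?_reverse]
  cases hs : (I.sort (· ≤ ·)) with
  | nil =>
    exfalso
    have : i₁ ∈ I.sort (· ≤ ·) := (Finset.mem_sort _).2 hi₁
    rw [hs] at this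
    simp at this
  | cons a t =>
    have haI : a ∈ I := (Finset.mem_sort _).1 (by rw [hs]; exact List.mem_cons_self)
    have hsorted := Finset.pairwise_sort (s := I) (r := (· ≤ ·))
    rw [hs, List.pairwise_cons] at hsorted
    have h1 : i₁ ≤ a := hmin a haI
    have h2 : a ≤ i₁ := by
      have : i₁ ∈ I.sort (· ≤ ·) := (Finset.mem_sort _).2 hi₁
      rw [hs] at this
      rcases List.mem_cons.1 this with rfl | hmem
      · exact le_rfl
      · exact hsorted.1 i₁ hmem
    simp only [List.head?_cons, Option.getD_some]
    omega

lemma fibSucc_zero : fibSucc 0 = 0 := by rw [fibSucc]; rfl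

lemma ppos_pair_cases {n : ℕ} (hpp : CMPPos WythoffSets ![n, fibSucc n]) :
    n = 0 ∨ WLower n := by
  have hw : WPSet n (fibSucc n) := (wpset_iff_ppos (n + fibSucc n) n (fibSucc n) le_rfl).1 hpp
  rcases hw with ⟨h0, _⟩ | ⟨a, ha, ⟨rfl, _⟩ | ⟨h1, h2⟩⟩
  · exact Or.inl h0
  · exact Or.inr ha
  · exfalso
    have ha0 := ha.1
    have h3 := fibSucc_gt ha.1
    have h4 : 0 < n := by omega
    have h5 := fibSucc_gt h4
    omega

lemma ppos_of_lower {a : ℕ} (ha : WLower a) : CMPPos WythoffSets ![a, fibSucc a] :=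
  (wpset_iff_ppos (a + fibSucc a) a (fibSucc a) le_rfl).2 (Or.inr ⟨a, ha, Or.inl ⟨rfl, rfl⟩⟩)
/-- Every positive integer `m` appears in exactly one P-position of Wythoff's
game of the form `(n, σ n)` (P-positions viewed as unordered pairs, recorded
here with the smaller entry first, which is `n` since `n ≤ σ n`). Moreover,
`m` is the smaller element of that P-position if and only if the index `i₁` of
the smallest Fibonacci number in the Zeckendorf representation of `m` is even. -/
theorem wythoff_every_pos_in_unique_ppos (m : ℕ) (hm : 0 < m) :
    (∃! s : ℕ × ℕ, (∃ n : ℕ, s = (n, fibSucc n)) ∧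
        CMPPos WythoffSets ![s.1, s.2] ∧ (m = s.1 ∨ m = s.2)) ∧
    (∀ s : ℕ × ℕ, (∃ n : ℕ, s = (n, fibSucc n)) →
        CMPPos WythoffSets ![s.1, s.2] → (m = s.1 ∨ m = s.2) →
        ∀ I : Finset ℕ, IsZeckendorf I → m = ∑ i ∈ I, Nat.fib i →
          ∀ i₁ ∈ I, (∀ j ∈ I, i₁ ≤ j) → (m = s.1 ↔ Even i₁)) := by
  have main : ∃ a, WLower a ∧ (m = a ∨ m = fibSucc a) := by
    rcases lower_or_upper hm with hL | hU
    · exact ⟨m, hL, Or.inl rfl⟩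
    · obtain ⟨a, hA, hσ⟩ := upper_eq_sigma hU
      exact ⟨a, hA, Or.inr hσ.symm⟩
  obtain ⟨a, hA, hma⟩ := main
  have huniq : ∀ n : ℕ, CMPPos WythoffSets ![n, fibSucc n] → (m = n ∨ m = fibSucc n) → n = a := by
    intro n hpp hm'
    rcases ppos_pair_cases hpp with rfl | hLn
    · rw [fibSucc_zero] at hm'; omega
    · rcases hma with rfl | rfl
      · rcases hm' with rfl | rfl
        · rfl
        · exact absurd hA (fun h => not_lower_upper h (lower_sigma_upper hLn))
      · rcases hm' with rfl | heq
        · exact absurd hLn (fun h => not_lower_upper h (lower_sigma_upper hA))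
        · exact sigma_inj hLn.1 hA.1 heq.symm
  constructor
  · refine ⟨(a, fibSucc a), ⟨⟨a, rfl⟩, ppos_of_lower hA, ?_⟩, ?_⟩
    · simpa using hma
    · rintro y ⟨⟨n, rfl⟩, hpp', hm'⟩
      simp only [Prod.fst, Prod.snd] at hm' hpp'
      have := huniq n hpp' hm'
      subst this
      rfl
  · rintro s ⟨n, rfl⟩ hpp hm' I hIz hIsum i₁ hi₁ hmin
    simp only [Prod.fst, Prod.snd] at hm' hpp ⊢
    have hmi : minIdx m = i₁ := finset_zeck_minIdx hIz hm hIsum hi₁ hmin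
    have hn : n = a := huniq n hpp hm'
    subst hn
    constructor
    · intro h1
      subst h1
      rw [← hmi]
      exact hA.2
    · intro hev
      rcases hm' with rfl | rfl
      · rfl
      · exfalso
        have hup := lower_sigma_upper hA
        rw [← hmi] at hev
        exact not_lower_upper ⟨hup.1, hev⟩ hup
end

section
/- The odd CM-Nim game with k jars has exactly the same P-positions as Nim with k piles: a position (a_1, ..., a_k) is a P-position of the odd CM-Nim game if and only if it is a P-position of Nim. -/
/-- The odd CM-Nim game with `k` jars: the permissible sets are exactly the
subsets of odd cardinality. -/
def OddSets (k : ℕ) : Set (Finset (Fin k)) := {S | Odd S.card}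

section OddNimAux

private instance : Std.Commutative (α := ℕ) (· ^^^ ·) := ⟨Nat.xor_comm⟩
private instance : Std.Associative (α := ℕ) (· ^^^ ·) := ⟨Nat.xor_assoc⟩

private def xorSum {k : ℕ} (p : Fin k → ℕ) : ℕ := Finset.fold (β := ℕ) (· ^^^ ·) 0 p Finset.univ

private lemma testBit_fold {ι : Type*} [DecidableEq ι] (s : Finset ι) (p : ι → ℕ) (b : ℕ) :
    (Finset.fold (β := ℕ) (· ^^^ ·) 0 p s).testBit b = true ↔ Odd (∑ i ∈ s, ((p i).testBit b).toNat) := by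
  induction s using Finset.induction with
  | empty => simp
  | @insert a s h ih =>
    rw [Finset.fold_insert h, Nat.testBit_xor, Finset.sum_insert h, Nat.odd_add]
    cases hx : (p a).testBit b <;>
      cases hy : (Finset.fold (β := ℕ) (· ^^^ ·) 0 p s).testBit b <;>
      simp_all [Nat.even_iff, Nat.odd_iff]

private lemma testBit_high {X b j : ℕ} (hj : b < j) (hX : X < 2 ^ (b + 1)) :
    X.testBit j = false := by
  apply Nat.testBit_lt_two_pow
  calc X < 2 ^ (b + 1) := hX
    _ ≤ 2 ^ j := Nat.pow_le_pow_right (by norm_num) (by omega)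

private lemma exists_nim_move {k : ℕ} (p : Fin k → ℕ) (h : xorSum p ≠ 0) :
    ∃ q, CMMove (NimSets k) p q ∧ xorSum q = 0 := by
  set X := xorSum p with hX
  set b := X.log2 with hb
  have h1 : 2 ^ b ≤ X := Nat.log2_self_le h
  have h2 : X < 2 ^ (b + 1) := Nat.lt_log2_self
  have hXb : X.testBit b = true := by
    rw [Nat.testBit_eq_decide_div_mod_eq]
    have hdv : X / 2 ^ b = 1 := Nat.div_eq_of_lt_le (by omega) (by omega)
    simp [hdv]
  have hOdd : Odd (∑ i, ((p i).testBit b).toNat) := by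
    rw [← testBit_fold]
    exact hXb
  obtain ⟨i, -, hi⟩ : ∃ i ∈ Finset.univ, ((p i).testBit b).toNat ≠ 0 :=
    Finset.exists_ne_zero_of_sum_ne_zero (by rw [Nat.odd_iff] at hOdd; omega)
  have hib : (p i).testBit b = true := by cases hx : (p i).testBit b <;> simp_all
  set v := p i ^^^ X with hv
  have hvlt : v < p i := by
    apply Nat.lt_of_testBit b
    · rw [hv, Nat.testBit_xor, hib, hXb]; rfl
    · exact hib
    · intro j hj
      rw [hv, Nat.testBit_xor, testBit_high hj h2, Bool.xor_false]
  set q := Function.update p i v with hq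
  have hqi : q i = v := Function.update_self i v p
  have hfold : ∀ r : Fin k → ℕ,
      Finset.fold (β := ℕ) (· ^^^ ·) 0 r Finset.univ = r i ^^^ Finset.fold (β := ℕ) (· ^^^ ·) 0 r (Finset.univ.erase i) := by
    intro r
    conv_lhs => rw [← Finset.insert_erase (Finset.mem_univ i)]
    rw [Finset.fold_insert (Finset.notMem_erase i _)]
  have hErase : Finset.fold (β := ℕ) (· ^^^ ·) 0 q (Finset.univ.erase i)
      = Finset.fold (β := ℕ) (· ^^^ ·) 0 p (Finset.univ.erase i) := by
    apply Finset.fold_congr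
    intro x hx
    exact Function.update_of_ne (Finset.ne_of_mem_erase hx) v p
  refine ⟨q, ⟨{i}, ⟨i, rfl⟩, ⟨i, Finset.mem_singleton_self i⟩, p i - v, by omega, ?_, ?_⟩, ?_⟩
  · intro j hj
    rw [Finset.mem_singleton] at hj
    subst hj
    exact ⟨by omega, by rw [hqi]; omega⟩
  · intro j hj
    rw [Finset.mem_singleton] at hj
    exact Function.update_of_ne hj v p
  · have hone : xorSum q = v ^^^ Finset.fold (β := ℕ) (· ^^^ ·) 0 p (Finset.univ.erase i) := by
      rw [xorSum, hfold q, hqi, hErase]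
    have hXeq : X = p i ^^^ Finset.fold (β := ℕ) (· ^^^ ·) 0 p (Finset.univ.erase i) := by
      rw [hX, xorSum, hfold p]
    rw [hone, hv, Nat.xor_comm (p i) X, Nat.xor_assoc, ← hXeq, Nat.xor_self]

private lemma testBit_sub_flip {a c b : ℕ} (hd : 2 ^ b ∣ c) (ho : Odd (c / 2 ^ b))
    (hle : c ≤ a) : (a - c).testBit b = !(a.testBit b) := by
  obtain ⟨e, hc⟩ := hd
  have hpow : 0 < 2 ^ b := Nat.pow_pos (by norm_num)
  have he : c / 2 ^ b = e := by rw [hc, Nat.mul_div_cancel_left _ hpow]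
  rw [he] at ho
  have hdiv : (a - c) / 2 ^ b = a / 2 ^ b - e := by
    rw [hc]; exact Nat.sub_mul_div _ _ _
  have hE : e ≤ a / 2 ^ b := (Nat.le_div_iff_mul_le hpow).mpr (by rw [Nat.mul_comm, ← hc]; exact hle)
  rw [Nat.odd_iff] at ho
  have key : ((a - c) / 2 ^ b % 2 = 1) ↔ ¬ (a / 2 ^ b % 2 = 1) := by rw [hdiv]; omega
  simp only [Nat.testBit_eq_decide_div_mod_eq]
  by_cases hA : a / 2 ^ b % 2 = 1
  · have hB : ¬ ((a - c) / 2 ^ b % 2 = 1) := fun hh => (key.mp hh) hA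
    simp [hA, hB]
  · simp [hA, key.mpr hA]

private lemma odd_move_ne {k : ℕ} {p q : Fin k → ℕ} (h0 : xorSum p = 0)
    (hm : CMMove (OddSets k) p q) : xorSum q ≠ 0 := by
  obtain ⟨S, hS, hne, c, hc, h1, h2⟩ := hm
  have hcne : c ≠ 0 := by omega
  set b := c.factorization 2 with hb
  have hd : 2 ^ b ∣ c := Nat.ordProj_dvd c 2
  have h2d : ¬ 2 ∣ c / 2 ^ b := by rw [hb]; exact Nat.not_dvd_ordCompl Nat.prime_two hcne
  have ho : Odd (c / 2 ^ b) := Nat.odd_iff.mpr (Nat.two_dvd_ne_zero.mp h2d)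
  intro hq0
  have hPsum : ¬ Odd (∑ i, ((p i).testBit b).toNat) := by
    rw [← testBit_fold, show Finset.fold (β := ℕ) (· ^^^ ·) 0 p Finset.univ = 0 from h0]
    simp
  have hQsum : ¬ Odd (∑ i, ((q i).testBit b).toNat) := by
    rw [← testBit_fold, show Finset.fold (β := ℕ) (· ^^^ ·) 0 q Finset.univ = 0 from hq0]
    simp
  have hsplitP := Finset.sum_add_sum_compl S (fun i => ((p i).testBit b).toNat)
  have hsplitQ := Finset.sum_add_sum_compl S (fun i => ((q i).testBit b).toNat)
  have hcomp : ∑ i ∈ Sᶜ, ((q i).testBit b).toNat = ∑ i ∈ Sᶜ, ((p i).testBit b).toNat :=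
    Finset.sum_congr rfl (fun i hi => by rw [h2 i (Finset.mem_compl.mp hi)])
  have hflip : ∀ i ∈ S, ((q i).testBit b).toNat + ((p i).testBit b).toNat = 1 := by
    intro i hi
    obtain ⟨hle, hqi⟩ := h1 i hi
    rw [hqi, testBit_sub_flip hd ho hle]
    cases (p i).testBit b <;> simp
  have hsum1 : ∑ i ∈ S, (((q i).testBit b).toNat + ((p i).testBit b).toNat) = S.card := by
    rw [Finset.sum_congr rfl hflip, Finset.sum_const, smul_eq_mul, mul_one]
  rw [Finset.sum_add_distrib] at hsum1
  have hcardodd : Odd S.card := hS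
  rw [Nat.odd_iff] at hcardodd
  rw [Nat.odd_iff] at hPsum hQsum
  omega

private lemma ppos_iff_xorSum {k : ℕ} (𝒮 : Set (Finset (Fin k)))
    (hsing : ∀ i : Fin k, ({i} : Finset (Fin k)) ∈ 𝒮) (hsub : 𝒮 ⊆ OddSets k) :
    ∀ p : Fin k → ℕ, CMPPos 𝒮 p ↔ xorSum p = 0 := by
  have key : ∀ n : ℕ, ∀ p : Fin k → ℕ, ∑ i, p i = n → (CMPPos 𝒮 p ↔ xorSum p = 0) := by
    intro n
    induction n using Nat.strong_induction_on with
    | _ n ih =>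
      intro p hp
      rw [CMPPos]
      constructor
      · intro h
        by_contra hx
        obtain ⟨q, hq, hq0⟩ := exists_nim_move p hx
        have hqm : CMMove 𝒮 p q := by
          obtain ⟨S, ⟨i, rfl⟩, rest⟩ := hq
          exact ⟨{i}, hsing i, rest⟩
        have hlt : ∑ i, q i < n := hp ▸ hqm.sum_lt
        exact h q hqm ((ih _ hlt q rfl).mpr hq0)
      · intro h0 q hq
        have hqodd : CMMove (OddSets k) p q := by
          obtain ⟨S, hSm, rest⟩ := hq
          exact ⟨S, hsub hSm, rest⟩
        have hlt : ∑ i, q i < n := hp ▸ CMMove.sum_lt hq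
        rw [ih _ hlt q rfl]
        exact odd_move_ne h0 hqodd
  intro p
  exact key _ p rfl

end OddNimAux

/-- The odd CM-Nim game with `k` jars has exactly the same P-positions as Nim
with `k` piles. -/
theorem oddGame_ppos_iff_nim_ppos (k : ℕ) (a : Fin k → ℕ) :
    CMPPos (OddSets k) a ↔ CMPPos (NimSets k) a := by
  rw [ppos_iff_xorSum (OddSets k) (fun i => by simp [OddSets]) (fun S hS => hS),
      ppos_iff_xorSum (NimSets k) (fun i => ⟨i, rfl⟩)
        (fun S hS => by obtain ⟨i, rfl⟩ := hS; simp [OddSets])]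
end

section
/- Adding moves to an impartial game that only lead from the old game's P-positions to the old game's N-positions does not change the set of P-positions: let X be a set of positions, let M ⊆ X × X be a move relation whose converse is well-founded (every play terminates), and define P-positions of M by the recursion 'p is a P-position iff every move from p leads to a non-P-position'. Let M' ⊇ M be another such move relation (with well-founded converse) such that every pair (p, q) ∈ M' \ M has p a P-position of M and q an N-position of M. Then the P-positions of M' are exactly the P-positions of M. -/
/-- P-positions of an impartial game given by a move relation `M` on positions
`X` whose converse is well-founded (every play terminates), defined by
well-founded recursion: `p` is a P-position iff every move from `p` leads to a
position that is not a P-position. -/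
def GamePPos {X : Type*} (M : X → X → Prop) (h : WellFounded (fun q p => M p q))
    (p : X) : Prop :=
  WellFounded.fix (C := fun _ => Prop) h
    (fun p ih => ∀ q, ∀ hq : M p q, ¬ ih q hq) p

theorem GamePPos_iff {X : Type*} (M : X → X → Prop) (h : WellFounded (fun q p => M p q))
    (p : X) : GamePPos M h p ↔ ∀ q, M p q → ¬ GamePPos M h q := by
  rw [GamePPos, WellFounded.fix_eq]
  rfl

/-- Adding moves to an impartial game that only lead from the old game's
P-positions to the old game's N-positions does not change the set of
P-positions. -/
theorem ppos_eq_of_added_moves {X : Type*} (M M' : X → X → Prop)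
    (hM : WellFounded (fun q p => M p q)) (hM' : WellFounded (fun q p => M' p q))
    (hsub : ∀ p q, M p q → M' p q)
    (hnew : ∀ p q, M' p q → ¬ M p q →
      GamePPos M hM p ∧ ¬ GamePPos M hM q) :
    ∀ p, GamePPos M' hM' p ↔ GamePPos M hM p := by
  intro p
  induction p using hM'.induction with
  | _ p ih =>
    rw [GamePPos_iff M' hM', GamePPos_iff M hM]
    constructor
    · intro h q hq
      have := h q (hsub p q hq)
      rw [ih q (hsub p q hq)] at this
      exact this
    · intro h q hq
      rw [ih q hq]
      by_cases hm : M p q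
      · exact h q hm
      · exact (hnew p q hq hm).2
end

section
/- In the All-but-k game with k jars (k ≥ 2), the position (n, n, ..., n) in which all k jars contain the same number n of cookies is a P-position, for every natural number n. -/
/-- The All-but-`k` game with `k` jars: the permissible sets are all nonempty
proper subsets of the set of jars. -/
def AllButSets (k : ℕ) : Set (Finset (Fin k)) :=
  {S | S.Nonempty ∧ S ≠ Finset.univ}

/-- In the All-but-`k` game with `k ≥ 2` jars, the position in which all jars
contain the same number `n` of cookies is a P-position, for every `n`. -/
theorem allBut_const_ppos (k : ℕ) (hk : 2 ≤ k) (n : ℕ) :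
    CMPPos (AllButSets k) (fun _ => n) := by
  induction n using Nat.strong_induction_on with
  | _ n ih =>
    rw [CMPPos]
    rintro q ⟨S, ⟨hSne, hSuniv⟩, -, c, hc, h1, h2⟩ hq
    -- from q, move on Sᶜ by c to reach the constant position n - c
    have hcn : c ≤ n := (h1 hSne.choose hSne.choose_spec).1
    have hmove : CMMove (AllButSets k) q (fun _ => n - c) := by
      refine ⟨Sᶜ, ⟨(Finset.compl_ne_univ_iff_nonempty _).mp (by simpa using hSuniv), ?_⟩,
        (Finset.compl_ne_univ_iff_nonempty _).mp (by simpa using hSuniv), c, hc, ?_, ?_⟩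
      · rw [Ne, Finset.compl_eq_univ_iff]
        rintro rfl
        exact hSne.ne_empty rfl
      · intro i hi
        rw [Finset.mem_compl] at hi
        rw [h2 i hi]
        exact ⟨hcn, rfl⟩
      · intro i hi
        rw [Finset.mem_compl, not_not] at hi
        exact ((h1 i hi).2).symm
    rw [CMPPos] at hq
    exact hq _ hmove (ih (n - c) (by omega))
end

section
/- In the All-but-k game with k jars (k ≥ 2), every position (a_1, ..., a_k) whose coordinates take exactly two distinct values, i.e., |{a_1, ..., a_k}| = 2, is an N-position. -/
lemma const_ppos (k : ℕ) : ∀ m, CMPPos (AllButSets k) (fun _ => m) := by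
  intro m
  induction m using Nat.strong_induction_on with
  | _ m IH =>
    rw [CMPPos]
    rintro q ⟨S, ⟨hne, hneq⟩, hSne, c, hc, h1, h2⟩
    obtain ⟨j, hj⟩ : ∃ j, j ∉ S := by
      by_contra h; push_neg at h; exact hneq (Finset.eq_univ_iff_forall.mpr h)
    obtain ⟨i0, hi0⟩ := hSne
    have hcm : c ≤ m := (h1 i0 hi0).1
    intro hq
    rw [CMPPos] at hq
    refine hq (fun _ => m - c) ⟨Sᶜ, ⟨⟨j, Finset.mem_compl.mpr hj⟩, ?_⟩,
      ⟨j, Finset.mem_compl.mpr hj⟩, c, hc, ?_, ?_⟩ (IH (m - c) (by omega))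
    · intro h
      have : i0 ∈ Sᶜ := h ▸ Finset.mem_univ i0
      exact (Finset.mem_compl.mp this) hi0
    · intro i hi
      have : i ∉ S := Finset.mem_compl.mp hi
      rw [h2 i this]; exact ⟨hcm, rfl⟩
    · intro i hi
      have : i ∈ S := by simpa using hi
      rw [(h1 i this).2]
/-- In the All-but-`k` game with `k ≥ 2` jars, every position whose coordinates
take exactly two distinct values is an N-position. -/
theorem allBut_two_values_npos (k : ℕ) (hk : 2 ≤ k) (a : Fin k → ℕ)
    (h2 : (Finset.univ.image a).card = 2) :
    ¬ CMPPos (AllButSets k) a := by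
  obtain ⟨x, y, hxy, hset⟩ := Finset.card_eq_two.mp h2
  wlog hlt : x < y generalizing x y
  · exact this y x hxy.symm (by rw [hset]; exact Finset.pair_comm x y) (by omega)
  have hx : ∃ i, a i = x := by
    have : x ∈ Finset.univ.image a := hset ▸ Finset.mem_insert_self x {y}
    simpa using this
  have hy : ∃ i, a i = y := by
    have : y ∈ Finset.univ.image a := hset ▸ Finset.mem_insert_of_mem (Finset.mem_singleton_self y)
    simpa using this
  have hall : ∀ i, a i = x ∨ a i = y := by
    intro i
    have : a i ∈ Finset.univ.image a := Finset.mem_image_of_mem a (Finset.mem_univ i)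
    rw [hset] at this
    simpa using this
  obtain ⟨ix, hix⟩ := hx
  obtain ⟨iy, hiy⟩ := hy
  intro h
  rw [CMPPos] at h
  refine h (fun _ => x) ⟨Finset.univ.filter (fun i => a i = y), ⟨⟨iy, by simp [hiy]⟩, ?_⟩,
    ⟨iy, by simp [hiy]⟩, y - x, by omega, ?_, ?_⟩ (const_ppos k x)
  · intro heq
    have : ix ∈ Finset.univ.filter (fun i => a i = y) := by
      rw [heq]; exact Finset.mem_univ ix
    simp only [Finset.mem_filter] at this
    omega
  · intro i hi
    simp only [Finset.mem_filter, Finset.mem_univ, true_and] at hi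
    refine ⟨by omega, ?_⟩
    show x = a i - (y - x)
    omega
  · intro i hi
    simp only [Finset.mem_filter, Finset.mem_univ, true_and] at hi
    show x = a i
    rcases hall i with h' | h' <;> omega
end

section
/- In any CM-Nim game on k jars in which the complement (within {1, ..., k}) of every permissible set is also a permissible set, the position (n, n, ..., n) with all jars containing the same number n of cookies is a P-position, for every natural number n. -/
/-- In any CM-Nim game on `k` jars (a family `𝒮` of nonempty permissible sets
containing every singleton) in which the complement of every permissible set is
also permissible, the position with all jars containing the same number `n` of
cookies is a P-position, for every `n`. -/
theorem const_ppos_of_compl_closed (k : ℕ) (𝒮 : Set (Finset (Fin k)))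
    (hne : ∀ S ∈ 𝒮, S.Nonempty)
    (hsingle : ∀ i : Fin k, ({i} : Finset (Fin k)) ∈ 𝒮)
    (hcompl : ∀ S ∈ 𝒮, Sᶜ ∈ 𝒮) (n : ℕ) :
    CMPPos 𝒮 (fun _ => n) := by
  induction n using Nat.strong_induction_on with
  | _ n ih =>
    rw [CMPPos]
    rintro q ⟨S, hS, hSne, c, hc, h1, h2⟩
    obtain ⟨i0, hi0⟩ := hSne
    have hcn : c ≤ n := (h1 i0 hi0).1
    intro hq
    rw [CMPPos] at hq
    refine hq (fun _ => n - c) ?_ (ih (n - c) (by omega))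
    refine ⟨Sᶜ, hcompl S hS, hne _ (hcompl S hS), c, hc, ?_, ?_⟩
    · intro i hi
      rw [Finset.mem_compl] at hi
      rw [h2 i hi]
      exact ⟨hcn, rfl⟩
    · intro i hi
      rw [Finset.mem_compl, not_not] at hi
      exact ((h1 i hi).2).symm
end

section
/- In any CM-Nim game on k jars, for any fixed values a_1, ..., a_{k-1} of the first k−1 jars there exists a unique natural number x such that (a_1, ..., a_{k-1}, x) is a P-position. -/
/-- In any CM-Nim game on `k + 1` jars (a family `𝒮` of nonempty permissible
sets containing every singleton), for any fixed contents `a` of the first `k`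
jars there is a unique number `x` of cookies in the last jar making the
position a P-position. -/
theorem exists_unique_last_jar (k : ℕ) (𝒮 : Set (Finset (Fin (k + 1))))
    (hne : ∀ S ∈ 𝒮, S.Nonempty)
    (hsingle : ∀ i : Fin (k + 1), ({i} : Finset (Fin (k + 1))) ∈ 𝒮)
    (a : Fin k → ℕ) :
    ∃! x : ℕ, CMPPos 𝒮 (Fin.snoc a x) := by
  classical
  have hlast : ({Fin.last k} : Finset (Fin (k + 1))) ∈ 𝒮 := hsingle _
  have hP : ∀ p : Fin (k + 1) → ℕ,
      CMPPos 𝒮 p ↔ ∀ q, CMMove 𝒮 p q → ¬ CMPPos 𝒮 q := by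
    intro p; rw [CMPPos]
  -- global uniqueness: for fixed first k jars, at most one P value of the last jar
  have huniq : ∀ (b : Fin k → ℕ) (x y : ℕ), CMPPos 𝒮 (Fin.snoc b x) →
      CMPPos 𝒮 (Fin.snoc b y) → x = y := by
    intro b x y hx hy
    by_contra hne2
    wlog hlt : x < y generalizing x y
    · exact this y x hy hx (Ne.symm hne2) (by omega)
    apply (hP _).1 hy (Fin.snoc b x) ?_ hx
    refine ⟨{Fin.last k}, hlast, ⟨_, Finset.mem_singleton_self _⟩, y - x, by omega, ?_, ?_⟩
    · intro i hi
      rw [Finset.mem_singleton] at hi; subst hi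
      simp only [Fin.snoc_last]
      omega
    · intro i hi
      rw [Finset.mem_singleton] at hi
      obtain ⟨j, rfl⟩ := Fin.exists_castSucc_eq.2 hi
      simp [Fin.snoc_castSucc]
  -- the (unique if any) P value of the last jar, as a function of the first k jars
  set g : (Fin k → ℕ) → ℕ :=
    fun b => if h : ∃ x, CMPPos 𝒮 (Fin.snoc b x) then h.choose else 0 with hgdef
  have hg : ∀ b x, CMPPos 𝒮 (Fin.snoc b x) → x = g b := by
    intro b x hx
    have h : ∃ x, CMPPos 𝒮 (Fin.snoc b x) := ⟨x, hx⟩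
    have hspec := h.choose_spec
    rw [hgdef]
    simp only [dif_pos h]
    exact huniq b x _ hx hspec
  suffices hex : ∃ x, CMPPos 𝒮 (Fin.snoc a x) by
    obtain ⟨x, hx⟩ := hex
    exact ⟨x, hx, fun y hy => huniq a y x hy hx⟩
  by_contra hcon
  push_neg at hcon
  set T : Finset (Fin k → ℕ) := Fintype.piFinset (fun i => Finset.range (a i + 1)) with hT
  set M := T.sup g with hM
  set x := M + ∑ i, a i + 1 with hxdef
  have hxN := hcon x
  rw [hP] at hxN
  push_neg at hxN
  obtain ⟨q, hmove, hq⟩ := hxN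
  obtain ⟨S, hS, hSne, c, hc, h1, h2⟩ := hmove
  set b : Fin k → ℕ := fun j => q j.castSucc with hb
  have hbq : ∀ j : Fin k, b j ≤ a j := by
    intro j
    by_cases hj : j.castSucc ∈ S
    · have := h1 _ hj
      rw [Fin.snoc_castSucc] at this
      simp only [hb]; omega
    · have := h2 _ hj
      rw [Fin.snoc_castSucc] at this
      simp only [hb]; omega
  have hbT : b ∈ T := by
    rw [hT, Fintype.mem_piFinset]
    intro j
    rw [Finset.mem_range]
    exact Nat.lt_succ_of_le (hbq j)
  have hgbM : g b ≤ M := Finset.le_sup hbT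
  have hqeq : q = Fin.snoc b (q (Fin.last k)) := by
    funext i
    induction i using Fin.lastCases with
    | last => rw [Fin.snoc_last]
    | cast j => rw [Fin.snoc_castSucc]
  by_cases hlastS : Fin.last k ∈ S
  · -- the move touches the last jar
    have h1l := h1 _ hlastS
    rw [Fin.snoc_last] at h1l
    by_cases hex2 : ∃ j : Fin k, j.castSucc ∈ S
    · obtain ⟨j, hj⟩ := hex2
      have h1j := h1 _ hj
      rw [Fin.snoc_castSucc] at h1j
      have hcsum : c ≤ ∑ i, a i :=
        le_trans h1j.1 (Finset.single_le_sum (fun i _ => Nat.zero_le (a i))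
          (Finset.mem_univ j))
      have : q (Fin.last k) = g b := hg b _ (hqeq ▸ hq)
      omega
    · -- S = {last}: the move only touches the last jar, contradicting hcon
      push_neg at hex2
      have hba : b = a := by
        funext j
        have := h2 _ (hex2 j)
        rw [Fin.snoc_castSucc] at this
        simpa [hb] using this
      exact hcon (q (Fin.last k)) (by rw [← hba, ← hqeq]; exact hq)
  · -- the move does not touch the last jar
    have hql : q (Fin.last k) = x := by
      have := h2 _ hlastS
      rw [Fin.snoc_last] at this
      exact this
    have : q (Fin.last k) = g b := hg b _ (hqeq ▸ hq)
    omega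
end
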